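/- Let A ∈ ℝ^{m×n} with m ≥ n have singular value decomposition A = U Σ Vᵀ with U, V orthogonal and Σ diagonal with diagonal entries σ₁ ≥ ⋯ ≥ σ_n ≥ 0, and let k < rank(A). Define A_k = U Σ_k Vᵀ, where Σ_k is obtained from Σ by replacing σ_{k+1}, …, σ_n with zeros. Then rank(A_k) = k and ‖A − A_k‖₂ = σ_{k+1}. -/

import Mathlib

open Matrix

/-- The Euclidean (2-)norm on `ℝ^m`. -/
noncomputable def eucNorm {m : ℕ} (v : Fin m → ℝ) : ℝ := Real.sqrt (∑ i, (v i) ^ 2)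

/-- The spectral norm `‖A‖₂ = max_{‖x‖₂ = 1} ‖Ax‖₂` of a real matrix. -/
noncomputable def matSpectralNorm {m n : ℕ} (A : Matrix (Fin m) (Fin n) ℝ) : ℝ :=
  sSup {r : ℝ | ∃ x : Fin n → ℝ, eucNorm x = 1 ∧ r = eucNorm (A.mulVec x)}

/-- `IsRSVD A U S V` says that `A = U Σ Vᵀ` is a singular value decomposition of the real
matrix `A`: `U`, `V` are orthogonal and `S` is diagonal with nonincreasing nonnegative
diagonal entries. -/
def IsRSVD {m n : ℕ} (A : Matrix (Fin m) (Fin n) ℝ) (U : Matrix (Fin m) (Fin m) ℝ)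
    (S : Matrix (Fin m) (Fin n) ℝ) (V : Matrix (Fin n) (Fin n) ℝ) : Prop :=
  Uᵀ * U = 1 ∧ Vᵀ * V = 1 ∧
  (∀ (i : Fin m) (j : Fin n), (i : ℕ) ≠ (j : ℕ) → S i j = 0) ∧
  (∀ (i : Fin m) (j : Fin n), 0 ≤ S i j) ∧
  (∀ (i i' : Fin m) (j j' : Fin n), (i : ℕ) = (j : ℕ) → (i' : ℕ) = (j' : ℕ) →
    (i : ℕ) ≤ (i' : ℕ) → S i' j' ≤ S i j) ∧
  A = U * S * Vᵀ

/-- Sum of squares equals the self dot product. -/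
lemma sum_sq_eq_dot {p : ℕ} (v : Fin p → ℝ) : ∑ i, v i ^ 2 = v ⬝ᵥ v := by
  simp [dotProduct, sq]

/-- A matrix with orthonormal columns preserves the Euclidean norm. -/
lemma enorm_mulVec_of_orth {p q : ℕ} (W : Matrix (Fin p) (Fin q) ℝ) (h : Wᵀ * W = 1)
    (x : Fin q → ℝ) : eucNorm (W *ᵥ x) = eucNorm x := by
  unfold eucNorm
  congr 1
  rw [sum_sq_eq_dot, sum_sq_eq_dot]
  calc (W *ᵥ x) ⬝ᵥ (W *ᵥ x) = ((W *ᵥ x) ᵥ* W) ⬝ᵥ x := dotProduct_mulVec _ _ _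
    _ = (Wᵀ *ᵥ (W *ᵥ x)) ⬝ᵥ x := by rw [mulVec_transpose]
    _ = ((Wᵀ * W) *ᵥ x) ⬝ᵥ x := by rw [mulVec_mulVec]
    _ = x ⬝ᵥ x := by rw [h, one_mulVec]

/-- For `A ∈ ℝ^{m×n}` (`m ≥ n`) with SVD `A = U Σ Vᵀ` and `k < rank(A)`, the truncated
matrix `A_k = U Σ_k Vᵀ` (where the singular values `σ_{k+1}, …, σ_n` are replaced by
zeros) has rank `k` and satisfies `‖A − A_k‖₂ = σ_{k+1}`. -/
theorem truncated_svd_rank_and_error {m n k : ℕ} (hnm : n ≤ m)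
    (A : Matrix (Fin m) (Fin n) ℝ) (U : Matrix (Fin m) (Fin m) ℝ)
    (S : Matrix (Fin m) (Fin n) ℝ) (V : Matrix (Fin n) (Fin n) ℝ)
    (hsvd : IsRSVD A U S V) (hk : k < A.rank) (hkn : k < n)
    (Sk : Matrix (Fin m) (Fin n) ℝ)
    (hSk : Sk = Matrix.of fun (i : Fin m) (j : Fin n) =>
      if (i : ℕ) < k ∧ (j : ℕ) < k then S i j else 0) :
    (U * Sk * Vᵀ).rank = k ∧
    matSpectralNorm (A - U * Sk * Vᵀ) = S (Fin.castLE hnm ⟨k, hkn⟩) ⟨k, hkn⟩ := by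
  obtain ⟨hU, hV, hdiag, hnn, hmono, hA⟩ := hsvd
  -- the diagonal entries
  set d : Fin n → ℝ := fun j => S (Fin.castLE hnm j) j with hd
  set σ : ℝ := d ⟨k, hkn⟩ with hσ
  have hmono' : ∀ j j' : Fin n, (j : ℕ) ≤ (j' : ℕ) → d j' ≤ d j := by
    intro j j' h
    exact hmono (Fin.castLE hnm j) (Fin.castLE hnm j') j j' (by simp) (by simp) (by simpa)
  have hdnn : ∀ j : Fin n, 0 ≤ d j := fun j => hnn _ _
  -- the rectangular identity-like matrix
  set P : Matrix (Fin m) (Fin n) ℝ :=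
    Matrix.of (fun i j => if (i : ℕ) = (j : ℕ) then 1 else 0) with hPdef
  have hP : Pᵀ * P = 1 := by
    ext j j'
    simp only [mul_apply, transpose_apply, hPdef, of_apply]
    rw [Finset.sum_eq_single (Fin.castLE hnm j)]
    · by_cases hjj : j = j'
      · subst hjj; simp [one_apply]
      · have h2 : ((Fin.castLE hnm j : Fin m) : ℕ) ≠ (j' : ℕ) := by
          simp only [Fin.coe_castLE]
          exact fun h => hjj (Fin.ext h)
        simp only [Fin.coe_castLE] at h2
        simp [h2, one_apply, hjj]
    · intro i _ hi
      have : (i : ℕ) ≠ (j : ℕ) := by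
        intro h; apply hi; apply Fin.ext; simpa using h.symm ▸ rfl
      simp [this]
    · simp
  -- diagonal factorizations
  have hfact : ∀ (w : Fin n → ℝ) (M : Matrix (Fin m) (Fin n) ℝ),
      (∀ (i : Fin m) (j : Fin n), ((i : ℕ) = (j : ℕ) → M i j = w j) ∧ ((i : ℕ) ≠ (j : ℕ) → M i j = 0)) →
      M = P * diagonal w := by
    intro w M hM
    ext i j
    rw [mul_diagonal]
    by_cases hij : (i : ℕ) = (j : ℕ)
    · rw [(hM i j).1 hij]; simp [hPdef, hij]
    · rw [(hM i j).2 hij]; simp [hPdef, hij]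
  have hSfact : S = P * diagonal d := by
    apply hfact
    intro i j
    constructor
    · intro hij
      have : i = Fin.castLE hnm j := by apply Fin.ext; simpa using hij
      rw [this]
    · exact hdiag i j
  set dk : Fin n → ℝ := fun j => if (j : ℕ) < k then d j else 0 with hdk
  have hSkfact : Sk = P * diagonal dk := by
    apply hfact
    intro i j
    constructor
    · intro hij
      have hi : i = Fin.castLE hnm j := by apply Fin.ext; simpa using hij
      subst hSk
      simp only [of_apply, hdk]
      by_cases hjk : (j : ℕ) < k
      · rw [if_pos ⟨by omega, hjk⟩, if_pos hjk, hi]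
      · rw [if_neg (by tauto), if_neg hjk]
    · intro hij
      subst hSk
      simp only [of_apply]
      by_cases h : (i : ℕ) < k ∧ (j : ℕ) < k
      · rw [if_pos h]; exact hdiag i j hij
      · rw [if_neg h]
  set e : Fin n → ℝ := fun j => if k ≤ (j : ℕ) then d j else 0 with he
  have hEfact : S - Sk = P * diagonal e := by
    have hde : (fun j => d j - dk j) = e := by
      funext j
      simp only [he, hdk]
      split_ifs with h1 h2 h3 <;> first | omega | ring
    rw [hSfact, hSkfact, ← Matrix.mul_sub, diagonal_sub, hde]
  -- determinants of the orthogonal factors are units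
  have hdetU : IsUnit U.det := by
    apply IsUnit.of_mul_eq_one U.det
    have := congrArg Matrix.det hU
    rwa [det_mul, det_transpose, det_one] at this
  have hdetVt : IsUnit (Vᵀ).det := by
    rw [det_transpose]
    apply IsUnit.of_mul_eq_one V.det
    have := congrArg Matrix.det hV
    rwa [det_mul, det_transpose, det_one] at this
  -- rank computations
  have hrank_of_fact : ∀ w : Fin n → ℝ,
      (P * diagonal w).rank = Fintype.card {j // w j ≠ 0} := by
    intro w
    rw [← rank_transpose_mul_self, transpose_mul, Matrix.mul_assoc, ← Matrix.mul_assoc Pᵀ, hP, Matrix.one_mul,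
      diagonal_transpose, diagonal_mul_diagonal, rank_diagonal]
    exact Fintype.card_congr (Equiv.subtypeEquivRight fun j => by
      simpa [← sq] using (pow_ne_zero_iff (n := 2) (by norm_num)).symm)
  have hrankA : A.rank = Fintype.card {j // d j ≠ 0} := by
    rw [hA, rank_mul_eq_left_of_isUnit_det _ _ hdetVt,
      rank_mul_eq_right_of_isUnit_det _ _ hdetU, hSfact, hrank_of_fact]
  -- σ is positive
  have hσpos : 0 < σ := by
    rcases lt_or_eq_of_le (hdnn ⟨k, hkn⟩) with h | h
    · exact h
    have hzero : ∀ j : Fin n, k ≤ (j : ℕ) → d j = 0 := by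
      intro j hj
      refine le_antisymm ?_ (hdnn j)
      calc d j ≤ d ⟨k, hkn⟩ := hmono' _ _ (by simpa using hj)
        _ = 0 := h.symm
    have hcard : Fintype.card {j : Fin n // d j ≠ 0} ≤ k := by
      have hinj : Function.Injective
          (fun j : {j : Fin n // d j ≠ 0} =>
            (⟨(j : Fin n), by
              by_contra hlt
              exact j.2 (hzero j (le_of_not_gt hlt))⟩ : Fin k)) := by
        intro a b hab
        apply Subtype.ext; apply Fin.ext
        simpa [Fin.ext_iff] using hab
      simpa using Fintype.card_le_of_injective _ hinj
    rw [hrankA] at hk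
    omega
  have hdpos : ∀ j : Fin n, (j : ℕ) ≤ k → 0 < d j := by
    intro j hj
    exact lt_of_lt_of_le hσpos (hmono' j ⟨k, hkn⟩ (by simpa using hj))
  -- rank of the truncation
  have hrankSk : (U * Sk * Vᵀ).rank = k := by
    rw [rank_mul_eq_left_of_isUnit_det _ _ hdetVt,
      rank_mul_eq_right_of_isUnit_det _ _ hdetU, hSkfact, hrank_of_fact]
    have hiff : ∀ j : Fin n, dk j ≠ 0 ↔ (j : ℕ) < k := by
      intro j
      simp only [hdk]
      constructor
      · intro hne
        by_contra hlt
        exact hne (if_neg hlt)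
      · intro hlt
        rw [if_pos hlt]
        exact (hdpos j (le_of_lt hlt)).ne'
    rw [Fintype.card_congr (Equiv.subtypeEquivRight hiff)]
    have : {j : Fin n // (j : ℕ) < k} ≃ Fin k :=
      { toFun := fun j => ⟨(j : Fin n), j.2⟩
        invFun := fun i => ⟨⟨(i : ℕ), lt_trans i.2 hkn⟩, i.2⟩
        left_inv := fun j => by apply Subtype.ext; apply Fin.ext; rfl
        right_inv := fun i => rfl }
    rw [Fintype.card_congr this, Fintype.card_fin]
  refine ⟨hrankSk, ?_⟩
  -- the spectral norm part
  have hVVt : V * Vᵀ = 1 := mul_eq_one_comm.mp hV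
  have hVt : (Vᵀ)ᵀ * Vᵀ = 1 := by rwa [transpose_transpose]
  have hMx : A - U * Sk * Vᵀ = U * (S - Sk) * Vᵀ := by
    rw [hA, Matrix.mul_sub, Matrix.sub_mul]
  -- key norm identity
  have hkey : ∀ x : Fin n → ℝ,
      eucNorm ((U * (S - Sk) * Vᵀ) *ᵥ x) = eucNorm (diagonal e *ᵥ (Vᵀ *ᵥ x)) := by
    intro x
    rw [← mulVec_mulVec, ← mulVec_mulVec, enorm_mulVec_of_orth U hU, hEfact,
      ← mulVec_mulVec, enorm_mulVec_of_orth P hP]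
  have henorm_sq : ∀ (p : ℕ) (v : Fin p → ℝ), eucNorm v = 1 → ∑ i, v i ^ 2 = 1 := by
    intro p v hv
    have := Real.sqrt_eq_one.mp hv
    exact this
  have hele : ∀ j : Fin n, 0 ≤ e j ∧ e j ≤ σ := by
    intro j
    simp only [he]
    by_cases hj : k ≤ (j : ℕ)
    · rw [if_pos hj]
      exact ⟨hdnn j, hmono' ⟨k, hkn⟩ j (by simpa using hj)⟩
    · rw [if_neg hj]
      exact ⟨le_refl 0, hσpos.le⟩
  -- upper bound for each element
  have hbound : ∀ y : Fin n → ℝ, eucNorm y = 1 → eucNorm (diagonal e *ᵥ y) ≤ σ := by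
    intro y hy
    unfold eucNorm
    have hsum : ∑ j, (diagonal e *ᵥ y) j ^ 2 ≤ σ ^ 2 := by
      calc ∑ j, (diagonal e *ᵥ y) j ^ 2 ≤ ∑ j, σ ^ 2 * y j ^ 2 := by
            apply Finset.sum_le_sum
            intro j _
            rw [mulVec_diagonal, mul_pow]
            have h1 : e j ^ 2 ≤ σ ^ 2 :=
              pow_le_pow_left₀ (hele j).1 (hele j).2 2
            exact mul_le_mul_of_nonneg_right h1 (sq_nonneg _)
        _ = σ ^ 2 * ∑ j, y j ^ 2 := by rw [Finset.mul_sum]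
        _ = σ ^ 2 := by rw [henorm_sq n y hy, mul_one]
    calc Real.sqrt (∑ j, (diagonal e *ᵥ y) j ^ 2) ≤ Real.sqrt (σ ^ 2) :=
          Real.sqrt_le_sqrt hsum
      _ = σ := Real.sqrt_sq hσpos.le
  -- the bound is attained
  set y₀ : Fin n → ℝ := fun j => if j = ⟨k, hkn⟩ then 1 else 0 with hy₀def
  have hy₀ : eucNorm y₀ = 1 := by
    unfold eucNorm
    have : ∑ j, y₀ j ^ 2 = 1 := by
      rw [hy₀def]
      rw [Finset.sum_eq_single (⟨k, hkn⟩ : Fin n)]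
      · simp
      · intro b _ hb; simp [hb]
      · simp
    rw [this, Real.sqrt_one]
  have hattain : eucNorm (diagonal e *ᵥ y₀) = σ := by
    unfold eucNorm
    have : ∑ j, (diagonal e *ᵥ y₀) j ^ 2 = σ ^ 2 := by
      rw [Finset.sum_eq_single (⟨k, hkn⟩ : Fin n)]
      · rw [mulVec_diagonal]
        have : e ⟨k, hkn⟩ = σ := by simp [he, hσ]
        simp [hy₀def, this]
      · intro b _ hb
        rw [mulVec_diagonal]
        simp [hy₀def, hb]
      · simp
    rw [this, Real.sqrt_sq hσpos.le]
  -- now compute the sSup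
  rw [hMx]
  have hσmem : σ ∈ {r : ℝ | ∃ x : Fin n → ℝ, eucNorm x = 1 ∧
      r = eucNorm ((U * (S - Sk) * Vᵀ) *ᵥ x)} := by
    refine ⟨V *ᵥ y₀, ?_, ?_⟩
    · rw [enorm_mulVec_of_orth V hV, hy₀]
    · rw [hkey, mulVec_mulVec y₀ Vᵀ V, hV, one_mulVec, hattain]
  have hub : ∀ r ∈ {r : ℝ | ∃ x : Fin n → ℝ, eucNorm x = 1 ∧
      r = eucNorm ((U * (S - Sk) * Vᵀ) *ᵥ x)}, r ≤ σ := by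
    rintro r ⟨x, hx, rfl⟩
    rw [hkey]
    apply hbound
    rw [enorm_mulVec_of_orth Vᵀ hVt, hx]
  have : matSpectralNorm (U * (S - Sk) * Vᵀ) = σ := by
    unfold matSpectralNorm
    exact le_antisymm (csSup_le ⟨σ, hσmem⟩ hub) (le_csSup ⟨σ, hub⟩ hσmem)
  exact this
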